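/- Let H be a real Hilbert space with inner product a, and for a finite index set Z let (H_z)_{z∈Z} be closed subspaces. Suppose e ∈ H and ζ_z ∈ H_z satisfy a(ζ_z, ψ) = a(e, ψ) for all ψ ∈ H_z. Suppose further that every w ∈ H admits a decomposition w = ∑_{z∈Z} ψ_z with ψ_z ∈ H_z and ∑_z ‖ψ_z‖² ≤ C² ‖w‖². Then ‖e‖ ≤ C (∑_{z∈Z} ‖ζ_z‖²)^{1/2}. -/

import Mathlib

/-- Abstract reliability bound: if `ζ z` is the local Ritz projection of the error `e`
onto the subspace `Hz z`, and `H` admits stable decompositions into the subspaces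
`Hz z` with constant `C`, then `‖e‖ ≤ C (∑_z ‖ζ z‖²)^{1/2}`. -/
theorem abstract_upper_bound
    {H : Type*} [NormedAddCommGroup H] [InnerProductSpace ℝ H] [CompleteSpace H]
    {ι : Type*} [Fintype ι]
    (Hz : ι → Submodule ℝ H) (C : ℝ) (hC : 0 ≤ C)
    (e : H) (ζ : ι → H) (hζmem : ∀ z, ζ z ∈ Hz z)
    (hζ : ∀ z, ∀ ψ ∈ Hz z, (inner ℝ (ζ z) ψ : ℝ) = inner ℝ e ψ)
    (hdecomp : ∀ w : H, ∃ ψ : ι → H, (∀ z, ψ z ∈ Hz z) ∧ w = ∑ z, ψ z ∧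
      (∑ z, ‖ψ z‖ ^ 2) ≤ C ^ 2 * ‖w‖ ^ 2) :
    ‖e‖ ≤ C * Real.sqrt (∑ z, ‖ζ z‖ ^ 2) := by
  obtain ⟨ψ, hmem, hsum, hstab⟩ := hdecomp e
  set S : ℝ := Real.sqrt (∑ z, ‖ζ z‖ ^ 2) with hS
  have hSnn : 0 ≤ S := Real.sqrt_nonneg _
  have hzsum : 0 ≤ ∑ z, ‖ζ z‖ ^ 2 := Finset.sum_nonneg fun z _ => sq_nonneg _
  have hpsum : 0 ≤ ∑ z, ‖ψ z‖ ^ 2 := Finset.sum_nonneg fun z _ => sq_nonneg _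
  have h1 : ‖e‖ ^ 2 = ∑ z, (inner ℝ (ζ z) (ψ z) : ℝ) := by
    calc ‖e‖ ^ 2 = (inner ℝ e e : ℝ) := (real_inner_self_eq_norm_sq e).symm
      _ = (inner ℝ e (∑ z, ψ z) : ℝ) := by rw [← hsum]
      _ = ∑ z, (inner ℝ e (ψ z) : ℝ) := inner_sum _ _ _
      _ = ∑ z, (inner ℝ (ζ z) (ψ z) : ℝ) := by
          exact Finset.sum_congr rfl fun z _ => (hζ z _ (hmem z)).symm
  have h2 : ‖e‖ ^ 2 ≤ ∑ z, ‖ζ z‖ * ‖ψ z‖ := by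
    rw [h1]
    exact Finset.sum_le_sum fun z _ => real_inner_le_norm _ _
  have hcs : (∑ z, ‖ζ z‖ * ‖ψ z‖) ^ 2 ≤ (∑ z, ‖ζ z‖ ^ 2) * (∑ z, ‖ψ z‖ ^ 2) :=
    Finset.sum_mul_sq_le_sq_mul_sq Finset.univ _ _
  have h3 : ∑ z, ‖ζ z‖ * ‖ψ z‖ ≤ S * Real.sqrt (∑ z, ‖ψ z‖ ^ 2) := by
    have hnn : 0 ≤ ∑ z, ‖ζ z‖ * ‖ψ z‖ :=
      Finset.sum_nonneg fun z _ => mul_nonneg (norm_nonneg _) (norm_nonneg _)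
    calc ∑ z, ‖ζ z‖ * ‖ψ z‖ = Real.sqrt ((∑ z, ‖ζ z‖ * ‖ψ z‖) ^ 2) := by
          rw [Real.sqrt_sq hnn]
      _ ≤ Real.sqrt ((∑ z, ‖ζ z‖ ^ 2) * (∑ z, ‖ψ z‖ ^ 2)) := Real.sqrt_le_sqrt hcs
      _ = S * Real.sqrt (∑ z, ‖ψ z‖ ^ 2) := Real.sqrt_mul hzsum _
  have h4 : Real.sqrt (∑ z, ‖ψ z‖ ^ 2) ≤ C * ‖e‖ := by
    calc Real.sqrt (∑ z, ‖ψ z‖ ^ 2) ≤ Real.sqrt (C ^ 2 * ‖e‖ ^ 2) :=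
          Real.sqrt_le_sqrt hstab
      _ = C * ‖e‖ := by
          rw [← mul_pow, Real.sqrt_sq (mul_nonneg hC (norm_nonneg _))]
  have h5 : ‖e‖ ^ 2 ≤ S * (C * ‖e‖) :=
    h2.trans (h3.trans (mul_le_mul_of_nonneg_left h4 hSnn))
  rcases eq_or_lt_of_le (norm_nonneg e) with h0 | h0
  · rw [← h0]; positivity
  · nlinarith [h5, h0]
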